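/- Let n ≥ 2 and m ≥ 2 be integers, let μ > 0, R > 0 and let L satisfy L/μ ≥ 2. Set α = √( 2(L/μ − 1)/n + 1 ), q = (α − 1)/(α + 1), and define f_SC : ℝ^m → ℝ by f_SC(x) = ((L − μ)/(4n)) ( Σ_{l=1}^{m−1} (x_l − x_{l+1})² + (2/(α+1)) x_m² ) + (μ/2)‖x‖² − μ R √α · x_1. Then for every 1 ≤ k ≤ m − 1, inf{ f_SC(x) : x ∈ F_k, ‖x‖ ≤ R } − inf{ f_SC(x) : ‖x‖ ≤ R } ≥ ( μ R² α/(α + 1) ) · q^{2k}. -/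

import Mathlib

open scoped BigOperators
open Finset

/-- `F_k = span{e_1, …, e_k} ⊆ ℝ^m` (so `F_0 = {0}`). -/
def Fspan (m k : ℕ) : Submodule ℝ (EuclideanSpace ℝ (Fin m)) :=
  Submodule.span ℝ {v | ∃ j : Fin m, (j : ℕ) < k ∧ v = EuclideanSpace.single j 1}


lemma cross_sum (c μ b : ℝ) (u h : ℕ → ℝ)
    (Hb : μ * u 0 - b = 2*c*(u 1 - u 0))
    (Hi : ∀ i, 2*c*(2*u (i+1) - u i - u (i+2)) + μ * u (i+1) = 0) :
    ∀ N : ℕ, 2*c * (∑ i ∈ range N, (h i - h (i+1)) * (u i - u (i+1)))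
      + μ * (∑ i ∈ range (N+1), h i * u i) - b * h 0
      = 2*c*(u (N+1) - u N) * h N := by
  intro N
  induction N with
  | zero =>
    simp only [range_zero, sum_empty, sum_range_one, mul_zero, zero_add]
    linear_combination h 0 * Hb
  | succ n ih =>
    rw [sum_range_succ, sum_range_succ (fun i => h i * u i) (n+1)]
    linear_combination ih + h (n+1) * Hi n

lemma quad_eval (c w μ b : ℝ) (N : ℕ) (u : ℕ → ℝ)
    (Hu : 2*c*(∑ i ∈ range N, (u i - u (i+1)) * (u i - u (i+1))) + 2*w*(u N * u N)
        + μ*(∑ i ∈ range (N+1), u i * u i) - b * u 0 = 0) :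
    c*(∑ i ∈ range N, (u i - u (i+1))^2) + w*(u N)^2
      + (μ/2)*(∑ i ∈ range (N+1), (u i)^2) - b*u 0 = -(b*u 0)/2 := by
  have E1 : ∑ i ∈ range N, (u i - u (i+1))^2
      = ∑ i ∈ range N, (u i - u (i+1)) * (u i - u (i+1)) :=
    sum_congr rfl (fun i _ => by ring)
  have E2 : ∑ i ∈ range (N+1), (u i)^2 = ∑ i ∈ range (N+1), u i * u i :=
    sum_congr rfl (fun i _ => by ring)
  rw [E1, E2]
  linear_combination (1/2) * Hu

lemma quad_lb (c w μ b : ℝ) (hc : 0 ≤ c) (hw : 0 ≤ w) (hμ : 0 ≤ μ)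
    (N : ℕ) (u : ℕ → ℝ)
    (Hcross : ∀ h : ℕ → ℝ, 2*c*(∑ i ∈ range N, (h i - h (i+1)) * (u i - u (i+1)))
      + 2*w*(h N * u N) + μ*(∑ i ∈ range (N+1), h i * u i) - b * h 0 = 0)
    (y : ℕ → ℝ) :
    -(b*u 0)/2 ≤ c*(∑ i ∈ range N, (y i - y (i+1))^2) + w*(y N)^2
      + (μ/2)*(∑ i ∈ range (N+1), (y i)^2) - b*y 0 := by
  have Hu := Hcross u
  have Hh := Hcross (fun i => y i - u i)
  beta_reduce at Hh
  have E1 : ∑ i ∈ range N, (y i - y (i+1))^2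
      = ∑ i ∈ range N, ((y i - u i - (y (i+1) - u (i+1)))^2
        + (u i - u (i+1)) * (u i - u (i+1))
        + 2*((y i - u i - (y (i+1) - u (i+1))) * (u i - u (i+1)))) :=
    sum_congr rfl (fun i _ => by ring)
  rw [sum_add_distrib, sum_add_distrib, ← mul_sum] at E1
  have E2 : ∑ i ∈ range (N+1), (y i)^2
      = ∑ i ∈ range (N+1), ((y i - u i)^2 + u i * u i + 2*((y i - u i) * u i)) :=
    sum_congr rfl (fun i _ => by ring)
  rw [sum_add_distrib, sum_add_distrib, ← mul_sum] at E2
  have P1 : 0 ≤ ∑ i ∈ range N, (y i - u i - (y (i+1) - u (i+1)))^2 :=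
    sum_nonneg fun i _ => sq_nonneg _
  have P2 : 0 ≤ ∑ i ∈ range (N+1), (y i - u i)^2 :=
    sum_nonneg fun i _ => sq_nonneg _
  have key : c*(∑ i ∈ range N, (y i - y (i+1))^2) + w*(y N)^2
      + (μ/2)*(∑ i ∈ range (N+1), (y i)^2) - b*y 0
      = c*(∑ i ∈ range N, (y i - u i - (y (i+1) - u (i+1)))^2)
        + w*(y N - u N)^2 + (μ/2)*(∑ i ∈ range (N+1), (y i - u i)^2)
        + (-(b*u 0)/2) := by
    linear_combination c*E1 + (μ/2)*E2 + (1/2)*Hu + Hh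
  have h3 : 0 ≤ c*(∑ i ∈ range N, (y i - u i - (y (i+1) - u (i+1)))^2) :=
    mul_nonneg hc P1
  have h4 : 0 ≤ w*(y N - u N)^2 := mul_nonneg hw (sq_nonneg _)
  have h5 : 0 ≤ (μ/2)*(∑ i ∈ range (N+1), (y i - u i)^2) :=
    mul_nonneg (by linarith) P2
  linarith

lemma Fspan_coord {m k : ℕ} {x : EuclideanSpace ℝ (Fin m)} (hx : x ∈ Fspan m k)
    (i : Fin m) (hik : k ≤ (i:ℕ)) : x i = 0 := by
  induction hx using Submodule.span_induction with
  | mem v hv =>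
    obtain ⟨j, hj, rfl⟩ := hv
    rw [EuclideanSpace.single_apply]
    have : i ≠ j := by intro h; subst h; omega
    simp [this]
  | zero => simp
  | add v w _ _ hv hw => simp [hv, hw]
  | smul a v _ hv => simp [hv]




lemma id_Hb_s (μ R sa q c D : ℝ) (h1q : 1 - q ≠ 0)
    (hc : c = μ*q/(2*(1-q)^2)) (hD : D = R*sa*(1-q)) :
    μ * (D*q^0) - μ*R*sa = 2*c*(D*q^1 - D*q^0) := by
  rw [hc, hD]; field_simp; ring

lemma id_Hi_s (μ R sa q c D : ℝ) (h1q : 1 - q ≠ 0)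
    (hc : c = μ*q/(2*(1-q)^2)) (hD : D = R*sa*(1-q)) :
    ∀ i : ℕ, 2*c*(2*(D*q^(i+1)) - D*q^i - D*q^(i+2)) + μ * (D*q^(i+1)) = 0 := by
  intro i; rw [hc, hD]; field_simp; ring

lemma id_Hb_t (μ R sa q c Bk : ℝ) (K : ℕ) (hq0 : q ≠ 0) (h1q : 1 - q ≠ 0)
    (hd : 1 + q^(2*K+3) ≠ 0) (hc : c = μ*q/(2*(1-q)^2))
    (hB : Bk = R*sa*(1-q)/(q*(1+q^(2*K+3)))) :
    μ * (Bk*q^(0+1) - Bk*q^(2*K+3)*(q⁻¹)^0) - μ*R*sa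
      = 2*c*((Bk*q^(1+1) - Bk*q^(2*K+3)*(q⁻¹)^1) - (Bk*q^(0+1) - Bk*q^(2*K+3)*(q⁻¹)^0)) := by
  rw [hc, hB]
  simp only [pow_zero, pow_one, zero_add, mul_one]
  field_simp
  ring

lemma id_Hi_t (μ R sa q c Bk : ℝ) (K : ℕ) (hq0 : q ≠ 0) (h1q : 1 - q ≠ 0)
    (hd : 1 + q^(2*K+3) ≠ 0) (hc : c = μ*q/(2*(1-q)^2))
    (hB : Bk = R*sa*(1-q)/(q*(1+q^(2*K+3)))) :
    ∀ i : ℕ, 2*c*(2*(Bk*q^(i+1+1) - Bk*q^(2*K+3)*(q⁻¹)^(i+1))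
        - (Bk*q^(i+1) - Bk*q^(2*K+3)*(q⁻¹)^i)
        - (Bk*q^(i+2+1) - Bk*q^(2*K+3)*(q⁻¹)^(i+2)))
      + μ * (Bk*q^(i+1+1) - Bk*q^(2*K+3)*(q⁻¹)^(i+1)) = 0 := by
  intro i; rw [hc, hB]
  simp only [inv_pow]
  field_simp
  ring

lemma id_ht1 (R sa q Bk : ℝ) (K : ℕ) (hq0 : q ≠ 0) (h1q : 1 - q ≠ 0)
    (hd : 1 + q^(2*K+3) ≠ 0)
    (hB : Bk = R*sa*(1-q)/(q*(1+q^(2*K+3)))) :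
    Bk*q^(K+1+1) - Bk*q^(2*K+3)*(q⁻¹)^(K+1) = 0 := by
  rw [inv_pow]
  field_simp
  ring

lemma id_idend (μ q c D α : ℝ) (h1q : 1 - q ≠ 0) (hα : α = (1+q)/(1-q))
    (hc : c = μ*q/(2*(1-q)^2)) (M : ℕ) :
    2*(2*c/(α+1))*(D*q^(M+1)) + 2*c*(D*q^(M+1+1) - D*q^(M+1)) = 0 := by
  rw [hc, hα]; field_simp; ring

lemma id_hG0 (μ R q α : ℝ) (h0 : 0 < q) (h1 : q < 1) (hα : α = (1+q)/(1-q)) :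
    μ*R^2*α/(α+1) = μ*R^2*(1+q)/2 := by
  have h1q : (0:ℝ) < 1 - q := by linarith
  have hα1 : α + 1 = 2/(1-q) := by rw [hα]; field_simp; ring
  rw [hα1, hα]
  rw [div_div_eq_mul_div]
  have : (1:ℝ) - q ≠ 0 := by linarith
  field_simp

lemma id_hbBk (μ R sa q Bk : ℝ) (K : ℕ) (hq0 : q ≠ 0) (h1q : 1 - q ≠ 0)
    (hd : 1 + q^(2*K+3) ≠ 0) (hss2 : sa * sa * (1 - q) = 1 + q)
    (hB : Bk = R*sa*(1-q)/(q*(1+q^(2*K+3)))) :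
    (μ*R*sa)*Bk = μ*R^2*(1+q)/(q*(1+q^(2*K+3))) := by
  rw [hB, eq_div_iff (by exact mul_ne_zero hq0 hd)]
  field_simp
  linear_combination (μ*R^2) * hss2

lemma id_e4 (μ R sa q Bk : ℝ) (K : ℕ) (hq0 : q ≠ 0) (h1q : 1 - q ≠ 0)
    (hd : 1 + q^(2*K+3) ≠ 0) (hss2 : sa * sa * (1 - q) = 1 + q)
    (hB : Bk = R*sa*(1-q)/(q*(1+q^(2*K+3)))) :
    (μ*R*sa)*(Bk*q - Bk*q^(2*K+3)) = μ*R^2*(1+q)*(1 - q^(2*K+2))/(1+q^(2*K+3)) := by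
  have h5 : (μ*R*sa)*(Bk*q - Bk*q^(2*K+3)) = ((μ*R*sa)*Bk)*(q - q^(2*K+3)) := by ring
  rw [h5, id_hbBk μ R sa q Bk K hq0 h1q hd hss2 hB]
  field_simp
  ring

lemma id_hid (μ R q : ℝ) (K : ℕ) (hd : 1 + q^(2*K+3) ≠ 0) :
    (μ*R^2*(1+q))/2 - (μ*R^2*(1+q)*(1 - q^(2*K+2))/(1+q^(2*K+3)))/2 - (μ*R^2*(1+q)/2)*q^(2*K+2)
      = μ*R^2*(1+q)*q^(2*K+3)*(1 - q^(2*K+2))/(2*(1+q^(2*K+3))) := by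
  field_simp
  ring


set_option maxHeartbeats 1000000

/-- Optimality-gap lower bound on the subspaces `F_k` for the strongly
convex hard instance `f_SC`: for `1 ≤ k ≤ m − 1`,
`inf{f_SC(x) : x ∈ F_k, ‖x‖ ≤ R} − inf{f_SC(x) : ‖x‖ ≤ R} ≥ (μR²α/(α+1)) q^{2k}`. -/
theorem fSC_subspace_gap
    (n m : ℕ) (hn : 2 ≤ n) (hm : 2 ≤ m)
    (L μ R : ℝ) (hμ : 0 < μ) (hR : 0 < R) (hL : 2 ≤ L / μ)
    (α q : ℝ) (hα : α = Real.sqrt (2 * (L / μ - 1) / n + 1)) (hq : q = (α - 1) / (α + 1))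
    (f : EuclideanSpace ℝ (Fin m) → ℝ)
    (hf : ∀ x, f x =
      ((L - μ) / (4 * n)) *
        ((∑ l : Fin (m - 1),
            (x (Fin.castLE (by omega) l) - x (Fin.cast (by omega : m - 1 + 1 = m) l.succ)) ^ 2)
          + (2 / (α + 1)) * (x ⟨m - 1, by omega⟩) ^ 2)
      + (μ / 2) * ‖x‖ ^ 2 - μ * R * Real.sqrt α * x ⟨0, by omega⟩) :
    ∀ k : ℕ, 1 ≤ k → k ≤ m - 1 →
      sInf (f '' {x | x ∈ Fspan m k ∧ ‖x‖ ≤ R}) - sInf (f '' {x | ‖x‖ ≤ R})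
        ≥ (μ * R ^ 2 * α / (α + 1)) * q ^ (2 * k) := by
  obtain ⟨M, rfl⟩ : ∃ M, m = M + 2 := ⟨m - 2, by omega⟩
  -- basic scalar facts
  have hn0 : (0:ℝ) < (n:ℝ) := by exact_mod_cast Nat.lt_of_lt_of_le (by norm_num) hn
  have harg : (1:ℝ) < 2 * (L / μ - 1) / n + 1 := by
    have h1 : (0:ℝ) < 2 * (L / μ - 1) / n := by
      apply div_pos (by linarith) hn0
    linarith
  have hα0 : 0 ≤ α := by rw [hα]; exact Real.sqrt_nonneg _
  have hαsq : α ^ 2 = 2 * (L / μ - 1) / n + 1 := by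
    rw [hα]; exact Real.sq_sqrt (by linarith)
  have hα1 : 1 < α := by nlinarith
  have hq0 : 0 < q := by rw [hq]; apply div_pos <;> linarith
  have hq1 : q < 1 := by rw [hq, div_lt_one (by linarith)]; linarith
  have h1q : (0:ℝ) < 1 - q := by linarith
  have hqne : q ≠ 0 := ne_of_gt hq0
  have h1qne : (1:ℝ) - q ≠ 0 := ne_of_gt h1q
  have hq2 : q * (α + 1) = α - 1 := by rw [hq]; field_simp
  have hαq : α = (1 + q) / (1 - q) := by
    rw [eq_div_iff h1qne]; linarith [hq2]
  set c := (L - μ) / (4 * (n:ℝ)) with hc_def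
  have hcq : c = μ * q / (2 * (1 - q)^2) := by
    have e2 : α ^ 2 - 1 = 4 * q / (1 - q)^2 := by
      rw [hαq]; field_simp; ring
    have e3 : 2 * (L / μ - 1) / n = 4 * q / (1 - q)^2 := by linarith
    rw [hc_def]
    rw [div_eq_div_iff (by positivity) (by positivity)]
    have e4 : 2 * (L / μ - 1) * (1 - q)^2 = 4 * q * n := by
      rw [div_eq_div_iff (by positivity) (by positivity)] at e3
      linarith
    have e5 : L / μ * μ = L := by field_simp
    nlinarith [e4, hμ]
  have hc0 : 0 ≤ c := by rw [hcq]; positivity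
  set sa := Real.sqrt α with hsa_def
  have hss : sa * sa = α := Real.mul_self_sqrt (by linarith)
  have hss2 : sa * sa * (1 - q) = 1 + q := by
    rw [hss, hαq]; field_simp
  set b := μ * R * sa with hb_def
  set D := R * sa * (1 - q) with hD_def
  -- sequence s
  have Hb_s : μ * (D*q^0) - b = 2*c*(D*q^1 - D*q^0) := by
    rw [hb_def]; exact id_Hb_s μ R sa q c D h1qne hcq hD_def
  have Hi_s : ∀ i : ℕ, 2*c*(2*(D*q^(i+1)) - D*q^i - D*q^(i+2)) + μ * (D*q^(i+1)) = 0 :=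
    id_Hi_s μ R sa q c D h1qne hcq hD_def
  intro k hk1 hk2
  obtain ⟨K, rfl⟩ : ∃ K, k = K + 1 := ⟨k - 1, by omega⟩
  have hKM : K ≤ M := by omega
  have hdpos : (0:ℝ) < 1 + q^(2*K+3) := by positivity
  have hdne : (1:ℝ) + q^(2*K+3) ≠ 0 := ne_of_gt hdpos
  set Bk := R * sa * (1 - q) / (q * (1 + q^(2*K+3))) with hBk_def
  have Hb_t : μ * (Bk*q^(0+1) - Bk*q^(2*K+3)*(q⁻¹)^0) - b
      = 2*c*((Bk*q^(1+1) - Bk*q^(2*K+3)*(q⁻¹)^1) - (Bk*q^(0+1) - Bk*q^(2*K+3)*(q⁻¹)^0)) := by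
    rw [hb_def]; exact id_Hb_t μ R sa q c Bk K hqne h1qne hdne hcq hBk_def
  have Hi_t : ∀ i : ℕ, 2*c*(2*(Bk*q^(i+1+1) - Bk*q^(2*K+3)*(q⁻¹)^(i+1))
        - (Bk*q^(i+1) - Bk*q^(2*K+3)*(q⁻¹)^i)
        - (Bk*q^(i+2+1) - Bk*q^(2*K+3)*(q⁻¹)^(i+2)))
      + μ * (Bk*q^(i+1+1) - Bk*q^(2*K+3)*(q⁻¹)^(i+1)) = 0 :=
    id_Hi_t μ R sa q c Bk K hqne h1qne hdne hcq hBk_def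
  have ht1 : Bk*q^(K+1+1) - Bk*q^(2*K+3)*(q⁻¹)^(K+1) = 0 :=
    id_ht1 R sa q Bk K hqne h1qne hdne hBk_def
  have HcrossT : ∀ h : ℕ → ℝ,
      2*c*(∑ i ∈ range K, (h i - h (i+1)) *
        ((Bk*q^(i+1) - Bk*q^(2*K+3)*(q⁻¹)^i) - (Bk*q^(i+1+1) - Bk*q^(2*K+3)*(q⁻¹)^(i+1))))
      + 2*c*(h K * (Bk*q^(K+1) - Bk*q^(2*K+3)*(q⁻¹)^K))
      + μ*(∑ i ∈ range (K+1), h i * (Bk*q^(i+1) - Bk*q^(2*K+3)*(q⁻¹)^i))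
      - b * h 0 = 0 := by
    intro h
    have CS := cross_sum c μ b (fun i => Bk*q^(i+1) - Bk*q^(2*K+3)*(q⁻¹)^i) h Hb_t Hi_t K
    beta_reduce at CS
    linear_combination CS + (2*c*h K) * ht1
  have idend : 2*(2*c/(α+1))*(D*q^(M+1)) + 2*c*(D*q^(M+1+1) - D*q^(M+1)) = 0 :=
    id_idend μ q c D α h1qne hαq hcq M
  have HcrossS : ∀ h : ℕ → ℝ,
      2*c*(∑ i ∈ range (M+1), (h i - h (i+1)) * (D*q^i - D*q^(i+1)))
      + 2*(2*c/(α+1))*(h (M+1) * (D*q^(M+1)))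
      + μ*(∑ i ∈ range (M+2), h i * (D*q^i))
      - b * h 0 = 0 := by
    intro h
    have CS := cross_sum c μ b (fun i => D*q^i) h Hb_s Hi_s (M+1)
    beta_reduce at CS
    linear_combination CS + (h (M+1)) * idend
  set Xf : EuclideanSpace ℝ (Fin (M+2)) → ℕ → ℝ :=
    fun x i => if hi : i < M+2 then x ⟨i, hi⟩ else 0 with hXf_def
  have hXlt : ∀ (x : EuclideanSpace ℝ (Fin (M+2))) (i : ℕ) (hi : i < M+2),
      Xf x i = x ⟨i, hi⟩ := by
    intro x i hi; rw [hXf_def]; exact dif_pos hi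
  have hXge : ∀ (x : EuclideanSpace ℝ (Fin (M+2))) (i : ℕ), M+2 ≤ i → Xf x i = 0 := by
    intro x i hi; rw [hXf_def]; exact dif_neg (by omega)
  have hnormsq : ∀ x : EuclideanSpace ℝ (Fin (M+2)), ‖x‖^2 = ∑ i ∈ range (M+2), (Xf x i)^2 := by
    intro x
    rw [EuclideanSpace.norm_eq, Real.sq_sqrt (by positivity)]
    have s1 : (∑ i : Fin (M+2), ‖x i‖^2) = ∑ i : Fin (M+2), (fun j : ℕ => (Xf x j)^2) ↑i := by
      refine sum_congr rfl fun i _ => ?_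
      simp only []
      rw [Real.norm_eq_abs, sq_abs, hXlt x ↑i i.isLt]
    rw [s1]
    exact Fin.sum_univ_eq_sum_range (fun j => (Xf x j)^2) (M+2)
  have hfX : ∀ x : EuclideanSpace ℝ (Fin (M+2)), f x =
      c * ((∑ i ∈ range (M+1), (Xf x i - Xf x (i+1))^2) + 2/(α+1) * (Xf x (M+1))^2)
      + μ/2 * (∑ i ∈ range (M+2), (Xf x i)^2) - b * Xf x 0 := by
    intro x
    rw [hf x]
    have h1 : (∑ l : Fin (M + 2 - 1),
        (x (Fin.castLE (by omega) l) - x (Fin.cast (by omega : M + 2 - 1 + 1 = M + 2) l.succ)) ^ 2)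
        = ∑ i ∈ range (M+1), (Xf x i - Xf x (i+1))^2 := by
      have s1 : (∑ l : Fin (M + 2 - 1),
          (x (Fin.castLE (by omega) l) - x (Fin.cast (by omega : M + 2 - 1 + 1 = M + 2) l.succ)) ^ 2)
          = ∑ l : Fin (M + 2 - 1), (fun i : ℕ => (Xf x i - Xf x (i+1))^2) ↑l := by
        refine sum_congr rfl fun l _ => ?_
        have hl : (l : ℕ) < M + 1 := by have := l.isLt; omega
        simp only []
        rw [hXlt x ↑l (by omega), hXlt x (↑l+1) (by omega)]
        rfl
      rw [s1]
      rw [Fin.sum_univ_eq_sum_range (fun i => (Xf x i - Xf x (i+1))^2) (M+2-1)]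
      rw [show M + 2 - 1 = M + 1 by omega]
    have e3 : x ⟨M + 2 - 1, by omega⟩ = Xf x (M+1) := (hXlt x (M+1) (by omega)).symm
    have e0 : x ⟨0, by omega⟩ = Xf x 0 := (hXlt x 0 (by omega)).symm
    rw [h1, hnormsq x, e3, e0]
  -- unconstrained minimizer
  set xstar : EuclideanSpace ℝ (Fin (M+2)) := WithLp.toLp 2 (fun j => D * q^(j:ℕ)) with hxstar_def
  have hXstar : ∀ i : ℕ, i < M+2 → Xf xstar i = D * q^i := by
    intro i hi; rw [hXlt xstar i hi]
  have hnormstar : ‖xstar‖ ≤ R := by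
    have h2 : ∑ i ∈ range (M+2), (Xf xstar i)^2 = D^2 * ∑ i ∈ range (M+2), (q^2)^i := by
      rw [mul_sum]; refine sum_congr rfl fun i hi => ?_
      rw [hXstar i (mem_range.mp hi)]; ring
    have hq2lt : q^2 < 1 := by nlinarith
    have hq2ne : q^2 ≠ 1 := by nlinarith
    have h1q2 : 0 < 1 - q^2 := by nlinarith
    have hpp : 0 ≤ (q^2)^(M+2) := by positivity
    have hgeom : ∑ i ∈ range (M+2), (q^2)^i = (1 - (q^2)^(M+2))/(1 - q^2) := by
      rw [geom_sum_eq hq2ne, ← neg_div_neg_eq]; ring_nf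
    have hgle : ∑ i ∈ range (M+2), (q^2)^i ≤ 1/(1-q^2) := by
      rw [hgeom, div_le_div_iff₀ h1q2 h1q2]; nlinarith
    have hD2 : D^2 = R^2*(1-q^2) := by
      rw [hD_def]; linear_combination (R^2*(1-q)) * hss2
    have hsq : ‖xstar‖^2 ≤ R^2 := by
      rw [hnormsq xstar, h2]
      calc D^2 * ∑ i ∈ range (M+2), (q^2)^i ≤ D^2 * (1/(1-q^2)) := by
            exact mul_le_mul_of_nonneg_left hgle (sq_nonneg D)
        _ = R^2 := by rw [hD2]; field_simp
    have h := Real.sqrt_le_sqrt hsq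
    rwa [Real.sqrt_sq (norm_nonneg _), Real.sqrt_sq hR.le] at h
  -- value at xstar
  have EV := quad_eval c (2*c/(α+1)) μ b (M+1) (fun i => D*q^i) (HcrossS (fun i => D*q^i))
  beta_reduce at EV
  rw [pow_zero, mul_one] at EV
  have hfxstar : f xstar = -(b*D)/2 := by
    have Ss1 : ∑ i ∈ range (M+1), (Xf xstar i - Xf xstar (i+1))^2
        = ∑ i ∈ range (M+1), (D*q^i - D*q^(i+1))^2 :=
      sum_congr rfl fun i hi => by
        rw [hXstar i (by have := mem_range.mp hi; omega),
          hXstar (i+1) (by have := mem_range.mp hi; omega)]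
    have Ss2 : ∑ i ∈ range (M+2), (Xf xstar i)^2 = ∑ i ∈ range (M+2), (D*q^i)^2 :=
      sum_congr rfl fun i hi => by rw [hXstar i (mem_range.mp hi)]
    have ee1 : Xf xstar (M+1) = D*q^(M+1) := hXstar (M+1) (by omega)
    have ee0 : Xf xstar 0 = D*q^0 := hXstar 0 (by omega)
    rw [hfX xstar, Ss1, Ss2, ee1, ee0, pow_zero, mul_one]
    linear_combination EV
  -- global lower bound on the ball
  have hflb : ∀ x : EuclideanSpace ℝ (Fin (M+2)), -(b*D)/2 ≤ f x := by
    intro x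
    have LB := quad_lb c (2*c/(α+1)) μ b hc0
      (div_nonneg (by linarith) (by linarith)) hμ.le (M+1) (fun i => D*q^i)
      (fun h => HcrossS h) (Xf x)
    beta_reduce at LB
    rw [pow_zero, mul_one] at LB
    have e : f x = c*(∑ i ∈ range (M+1), (Xf x i - Xf x (i+1))^2) + (2*c/(α+1))*(Xf x (M+1))^2
        + (μ/2)*(∑ i ∈ range (M+2), (Xf x i)^2) - b*(Xf x 0) := by
      rw [hfX x]; ring
    linarith [LB]
  have hBdd : BddBelow (f '' {x : EuclideanSpace ℝ (Fin (M+2)) | ‖x‖ ≤ R}) := by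
    refine ⟨-(b*D)/2, ?_⟩
    rintro a ⟨x, -, rfl⟩
    exact hflb x
  have hsB : sInf (f '' {x : EuclideanSpace ℝ (Fin (M+2)) | ‖x‖ ≤ R}) ≤ -(b*D)/2 := by
    rw [← hfxstar]; exact csInf_le hBdd ⟨xstar, hnormstar, rfl⟩
  -- lower bound on the subspace
  have hAlb : ∀ a ∈ f '' {x : EuclideanSpace ℝ (Fin (M+2)) | x ∈ Fspan (M+2) (K+1) ∧ ‖x‖ ≤ R},
      -(b*(Bk*q - Bk*q^(2*K+3)))/2 ≤ a := by
    rintro a ⟨x, ⟨hxF, -⟩, rfl⟩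
    have hz : ∀ i : ℕ, K+1 ≤ i → Xf x i = 0 := by
      intro i hi
      by_cases h2 : i < M+2
      · rw [hXlt x i h2]; exact Fspan_coord hxF ⟨i, h2⟩ hi
      · exact hXge x i (by omega)
    have e1 : ∑ i ∈ range (M+1), (Xf x i - Xf x (i+1))^2
        = ∑ i ∈ range K, (Xf x i - Xf x (i+1))^2 + (Xf x K)^2 := by
      have t1 : ∑ i ∈ range (K+1), (Xf x i - Xf x (i+1))^2
          = ∑ i ∈ range (M+1), (Xf x i - Xf x (i+1))^2 := by
        apply sum_subset (range_subset_range.mpr (by omega))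
        intro i hi hni
        have h1 : K+1 ≤ i := by simp only [mem_range] at hni; omega
        rw [hz i h1, hz (i+1) (by omega)]; ring
      rw [← t1, sum_range_succ, hz (K+1) (by omega), sub_zero]
    have e2 : ∑ i ∈ range (M+2), (Xf x i)^2 = ∑ i ∈ range (K+1), (Xf x i)^2 := by
      symm
      apply sum_subset (range_subset_range.mpr (by omega))
      intro i hi hni
      have h1 : K+1 ≤ i := by simp only [mem_range] at hni; omega
      rw [hz i h1]; ring
    have e3 : Xf x (M+1) = 0 := hz (M+1) (by omega)
    have efx : f x = c*(∑ i ∈ range K, (Xf x i - Xf x (i+1))^2) + c*(Xf x K)^2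
        + (μ/2)*(∑ i ∈ range (K+1), (Xf x i)^2) - b*(Xf x 0) := by
      rw [hfX x, e1, e2, e3]; ring
    have LB := quad_lb c c μ b hc0 hc0 hμ.le K (fun i => Bk*q^(i+1) - Bk*q^(2*K+3)*(q⁻¹)^i)
      (fun h => HcrossT h) (Xf x)
    beta_reduce at LB
    rw [pow_zero, mul_one, zero_add, pow_one] at LB
    linarith [LB]
  have hAne : (f '' {x : EuclideanSpace ℝ (Fin (M+2)) | x ∈ Fspan (M+2) (K+1) ∧ ‖x‖ ≤ R}).Nonempty := by
    refine ⟨f 0, ⟨0, ⟨Submodule.zero_mem _, ?_⟩, rfl⟩⟩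
    rw [norm_zero]; exact hR.le
  have hsA : -(b*(Bk*q - Bk*q^(2*K+3)))/2
      ≤ sInf (f '' {x : EuclideanSpace ℝ (Fin (M+2)) | x ∈ Fspan (M+2) (K+1) ∧ ‖x‖ ≤ R}) :=
    le_csInf hAne hAlb
  -- final arithmetic
  rw [ge_iff_le, show 2*(K+1) = 2*K+2 by omega]
  have hbD : b*D = μ*R^2*(1+q) := by
    rw [hb_def, hD_def]; linear_combination (μ*R^2) * hss2
  have hbBk : b*Bk = μ*R^2*(1+q)/(q*(1+q^(2*K+3))) := by
    rw [hb_def]; exact id_hbBk μ R sa q Bk K hqne h1qne hdne hss2 hBk_def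
  have e4 : b*(Bk*q - Bk*q^(2*K+3)) = μ*R^2*(1+q)*(1 - q^(2*K+2))/(1+q^(2*K+3)) := by
    rw [hb_def]; exact id_e4 μ R sa q Bk K hqne h1qne hdne hss2 hBk_def
  have hG0 : μ*R^2*α/(α+1) = μ*R^2*(1+q)/2 := id_hG0 μ R q α hq0 hq1 hαq
  have hQ1 : q^(2*K+2) ≤ 1 := pow_le_one₀ hq0.le hq1.le
  have hid : (b*D)/2 - (b*(Bk*q - Bk*q^(2*K+3)))/2 - (μ*R^2*(1+q)/2)*q^(2*K+2)
      = μ*R^2*(1+q)*q^(2*K+3)*(1 - q^(2*K+2))/(2*(1+q^(2*K+3))) := by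
    rw [hbD, e4]; exact id_hid μ R q K hdne
  have hpos2 : 0 ≤ μ*R^2*(1+q)*q^(2*K+3)*(1 - q^(2*K+2))/(2*(1+q^(2*K+3))) := by
    apply div_nonneg _ (by positivity)
    apply mul_nonneg (by positivity) (by linarith)
  have key : μ*R^2*α/(α+1)*q^(2*K+2) ≤ -(b*(Bk*q - Bk*q^(2*K+3)))/2 + (b*D)/2 := by
    rw [hG0]; linarith [hid, hpos2]
  linarith [hsA, hsB, key]
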